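/- For q a prime power with q ≡ 1 mod 4, and f, g monic polynomials in F_q[t], the quadratic residue symbols satisfy reciprocity: (f/g) = (g/f). -/

import Mathlib

open Polynomial UniqueFactorizationMonoid

/-- The quadratic residue symbol `(g/p)` for `p` a monic prime of `F_q[t]`:
`0` if `p ∣ g`, `1` if `g` is a nonzero square modulo `p`, `-1` otherwise. -/
noncomputable def legSym (F : Type*) [Field F] [Fintype F] (p g : Polynomial F) : ℤ :=
  letI := Classical.propDecidable (p ∣ g)
  letI := Classical.propDecidable (∃ h : Polynomial F, p ∣ g - h ^ 2)
  if p ∣ g then 0 else if ∃ h : Polynomial F, p ∣ g - h ^ 2 then 1 else -1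

/-- The quadratic residue symbol `(g/f)`, extended multiplicatively over the (monic) prime
factorization of `f`. -/
noncomputable def resSym (F : Type*) [Field F] [Fintype F] (f g : Polynomial F) : ℤ :=
  ((UniqueFactorizationMonoid.factors f).map fun p => legSym F p g).prod

section Aux

lemma multiset_prod_map_swap {α β γ : Type*} [CommMonoid γ] (s : Multiset α) (t : Multiset β)
    (f : α → β → γ) :
    (s.map fun a => (t.map fun b => f a b).prod).prod
      = (t.map fun b => (s.map fun a => f a b).prod).prod := by
  induction s using Multiset.induction with
  | empty => simp
  | cons a s ih => simp [ih, Multiset.prod_map_mul]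

variable {F : Type*} [Field F] [Fintype F]

lemma legSym_congr_left {p p' : Polynomial F} (g : Polynomial F) (h : Associated p p') :
    legSym F p g = legSym F p' g := by
  have h1 : ∀ c : Polynomial F, p ∣ c ↔ p' ∣ c := fun c => h.dvd_iff_dvd_left
  have e1 : (p ∣ g) = (p' ∣ g) := propext (h1 g)
  have e2 : (∃ h : Polynomial F, p ∣ g - h ^ 2) = (∃ h : Polynomial F, p' ∣ g - h ^ 2) :=
    propext (exists_congr fun h => h1 _)
  unfold legSym
  rw [e1, e2]

lemma legSym_one_or_neg_one {p g : Polynomial F} (h : ¬ p ∣ g) :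
    legSym F p g = 1 ∨ legSym F p g = -1 := by
  classical
  unfold legSym
  rw [if_neg h]
  split_ifs <;> simp

lemma exists_frobAlg (j : ℕ) :
    ∃ φ : AlgebraicClosure F →ₐ[F] AlgebraicClosure F,
      ∀ x, φ x = x ^ Fintype.card F ^ j := by
  obtain ⟨n, hprime, hcard⟩ := FiniteField.card F (ringChar F)
  haveI := Fact.mk hprime
  have key : ∀ x : AlgebraicClosure F,
      iterateFrobenius (AlgebraicClosure F) (ringChar F) ((n : ℕ) * j) x
        = x ^ Fintype.card F ^ j := by
    intro x
    rw [iterateFrobenius_def, hcard, pow_mul]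
  refine ⟨{ toRingHom := iterateFrobenius (AlgebraicClosure F) (ringChar F) ((n : ℕ) * j),
            commutes' := ?_ }, key⟩
  intro c
  show iterateFrobenius (AlgebraicClosure F) (ringChar F) ((n : ℕ) * j)
      (algebraMap F (AlgebraicClosure F) c) = algebraMap F (AlgebraicClosure F) c
  rw [key, ← map_pow, FiniteField.pow_card_pow]

lemma aroots_frobenius_orbit {p : Polynomial F} (hp : Irreducible p)
    {α : AlgebraicClosure F} (hα : aeval α p = 0) :
    p.aroots (AlgebraicClosure F)
      = (Multiset.range p.natDegree).map fun i => α ^ Fintype.card F ^ i := by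
  haveI := Fact.mk hp
  set q := Fintype.card F with hq
  set d := p.natDegree with hd
  have hq1 : 1 < q := Fintype.one_lt_card
  set K := AdjoinRoot p
  haveI : Module.Finite F K := (AdjoinRoot.powerBasis hp.ne_zero).finite
  haveI : Finite K := Module.finite_of_finite F
  haveI : Fintype K := Fintype.ofFinite _
  have hcardK : Fintype.card K = q ^ d := by
    rw [Module.card_eq_pow_finrank (K := F) (V := K), (AdjoinRoot.powerBasis hp.ne_zero).finrank,
      AdjoinRoot.powerBasis_dim]
  set emb : K →ₐ[F] (AlgebraicClosure F) := AdjoinRoot.liftAlgHom p (Algebra.ofId F (AlgebraicClosure F)) α hα with hemb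
  have hembroot : emb (AdjoinRoot.root p) = α := by
    rw [hemb]; exact AdjoinRoot.liftAlgHom_root _ _ _ _
  have hembinj : Function.Injective emb := (emb : K →+* (AlgebraicClosure F)).injective
  have claim : ∀ k, 0 < k → k < d → α ^ q ^ k ≠ α := by
    intro k hk0 hkd hkeq
    obtain ⟨φ, hφ⟩ := exists_frobAlg (F := F) k
    have hcomp : φ.comp emb = emb := by
      apply AdjoinRoot.algHom_ext
      rw [AlgHom.comp_apply, hembroot, hφ, hkeq]
    have hzK : ∀ z : K, z ^ q ^ k = z := by
      intro z
      apply hembinj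
      have := AlgHom.congr_fun hcomp z
      rw [AlgHom.comp_apply, hφ] at this
      rw [map_pow, this]
    set P : Polynomial K := X ^ q ^ k - X with hP
    have hqk1 : 1 < q ^ k := Nat.one_lt_pow hk0.ne' hq1
    have hP0 : P ≠ 0 := by
      intro hc
      have h1 : P.coeff (q ^ k) = 1 := by
        rw [hP, coeff_sub, coeff_X_pow, if_pos rfl, coeff_X, if_neg (by omega), sub_zero]
      rw [hc, coeff_zero] at h1
      exact one_ne_zero h1.symm
    have hsub : (Finset.univ.val : Multiset K) ≤ P.roots := by
      refine (Multiset.le_iff_subset Finset.univ.nodup).mpr fun z _ => ?_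
      rw [mem_roots hP0]
      show P.eval z = 0
      rw [hP, eval_sub, eval_pow, eval_X, hzK z, sub_self]
    have hcardle : q ^ d ≤ q ^ k := by
      calc q ^ d = Fintype.card K := hcardK.symm
        _ = Multiset.card (Finset.univ.val : Multiset K) := rfl
        _ ≤ Multiset.card P.roots := Multiset.card_le_card hsub
        _ ≤ P.natDegree := P.card_roots'
        _ ≤ q ^ k := by
            rw [hP]
            refine le_trans (natDegree_sub_le _ _) ?_
            simp only [natDegree_X_pow, natDegree_X, max_le_iff, le_refl, true_and]
            omega
    exact absurd hcardle (not_le.mpr (Nat.pow_lt_pow_right hq1 hkd))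
  have haux : ∀ i j, i ≤ j → j < d → α ^ q ^ i = α ^ q ^ j → i = j := by
    intro i j hij hjd he
    rcases Nat.exists_eq_add_of_le hij with ⟨k, rfl⟩
    rcases Nat.eq_zero_or_pos k with hk | hk
    · omega
    · exfalso
      obtain ⟨φ, hφ⟩ := exists_frobAlg (F := F) i
      have hφinj : Function.Injective φ := (φ : (AlgebraicClosure F) →+* (AlgebraicClosure F)).injective
      have : φ (α ^ q ^ k) = φ α := by
        rw [hφ, hφ, ← pow_mul, ← pow_add, Nat.add_comm k i, ← he]
      exact claim k hk (by omega) (hφinj this)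
  have hinj : ∀ i ∈ Multiset.range d, ∀ j ∈ Multiset.range d,
      α ^ q ^ i = α ^ q ^ j → i = j := by
    intro i hi j hj he
    rw [Multiset.mem_range] at hi hj
    rcases le_total i j with h | h
    · exact haux i j h hj he
    · exact (haux j i h hi he.symm).symm
  have hsep : (p.map (algebraMap F (AlgebraicClosure F))).Separable :=
    (PerfectField.separable_of_irreducible hp).map
  have hnodupR : ((Multiset.range d).map fun i => α ^ q ^ i).Nodup :=
    (Multiset.nodup_range d).map_on hinj
  have hmem : ∀ z ∈ (Multiset.range d).map fun i => α ^ q ^ i, z ∈ p.aroots (AlgebraicClosure F) := by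
    intro z hz
    rw [Multiset.mem_map] at hz
    obtain ⟨i, _, rfl⟩ := hz
    rw [mem_aroots]
    obtain ⟨φ, hφ⟩ := exists_frobAlg (F := F) i
    refine ⟨hp.ne_zero, ?_⟩
    rw [← hφ, aeval_algHom_apply, hα, map_zero]
  have hle : ((Multiset.range d).map fun i => α ^ q ^ i) ≤ p.aroots (AlgebraicClosure F) :=
    (Multiset.le_iff_subset hnodupR).mpr hmem
  have hcards : Multiset.card (p.aroots (AlgebraicClosure F)) = d := by
    rw [aroots_def, ← (IsAlgClosed.splits (p.map (algebraMap F (AlgebraicClosure F)))).natDegree_eq_card_roots,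
      natDegree_map]
  refine (Multiset.eq_of_le_of_card_le hle ?_).symm
  rw [hcards, Multiset.card_map, Multiset.card_range]

section Prime

variable {p : Polynomial F} [hpI : Fact (Irreducible p)]

noncomputable local instance : Fintype (AdjoinRoot p) :=
  haveI : Module.Finite F (AdjoinRoot p) := (AdjoinRoot.powerBasis hpI.out.ne_zero).finite
  haveI : Finite (AdjoinRoot p) := Module.finite_of_finite F
  Fintype.ofFinite _

noncomputable local instance : DecidableEq (AdjoinRoot p) := Classical.decEq _

lemma legSym_eq_quadChar (g : Polynomial F) :
    legSym F p g = quadraticChar (AdjoinRoot p) (AdjoinRoot.mk p g) := by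
  have hsq : (∃ h : Polynomial F, p ∣ g - h ^ 2) ↔ IsSquare (AdjoinRoot.mk p g) := by
    constructor
    · rintro ⟨h, hd⟩
      refine ⟨AdjoinRoot.mk p h, ?_⟩
      have : AdjoinRoot.mk p (g - h ^ 2) = 0 := AdjoinRoot.mk_eq_zero.mpr hd
      rw [map_sub, sub_eq_zero] at this
      rw [this, map_pow, sq]
    · rintro ⟨z, hz⟩
      obtain ⟨h, rfl⟩ := AdjoinRoot.mk_surjective z
      refine ⟨h, AdjoinRoot.mk_eq_zero.mp ?_⟩
      rw [map_sub, sub_eq_zero, hz, map_pow, sq]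
  by_cases h0 : p ∣ g
  · have : AdjoinRoot.mk p g = 0 := AdjoinRoot.mk_eq_zero.mpr h0
    simp [legSym, h0, this]
  · have hmk : AdjoinRoot.mk p g ≠ 0 := fun hc => h0 (AdjoinRoot.mk_eq_zero.mp hc)
    rw [legSym]
    simp only [h0, if_false]
    by_cases hs : IsSquare (AdjoinRoot.mk p g)
    · rw [if_pos (hsq.mpr hs), (quadraticChar_one_iff_isSquare hmk).mpr hs]
    · rw [if_neg (fun hc => hs (hsq.mp hc)), (quadraticChar_neg_one_iff_not_isSquare).mpr hs]

lemma card_adjoinRoot : Fintype.card (AdjoinRoot p) = Fintype.card F ^ p.natDegree := by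
  haveI : Module.Finite F (AdjoinRoot p) := (AdjoinRoot.powerBasis hpI.out.ne_zero).finite
  rw [Module.card_eq_pow_finrank (K := F), (AdjoinRoot.powerBasis hpI.out.ne_zero).finrank,
    AdjoinRoot.powerBasis_dim]

/-- Euler's criterion transported to the algebraic closure. -/
lemma legSym_cast (hq2 : Fintype.card F % 2 = 1) (g : Polynomial F) (hpg : ¬ p ∣ g) :
    (legSym F p g : AlgebraicClosure F)
      = (((p.aroots (AlgebraicClosure F)).map fun a => aeval a g).prod) ^ (Fintype.card F / 2) := by
  have hp := hpI.out
  set q := Fintype.card F with hqdef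
  set d := p.natDegree with hd
  have hq1 : 1 < q := Fintype.one_lt_card
  have hd0 : 0 < d := hp.natDegree_pos
  -- a root of p in the algebraic closure
  have hdeg : p.degree ≠ 0 := degree_ne_of_natDegree_ne hd0.ne'
  obtain ⟨α, hα⟩ := IsAlgClosed.exists_aeval_eq_zero (AlgebraicClosure F) p hdeg
  set x : AlgebraicClosure F := aeval α g with hx
  -- rewrite the product over roots
  have hroots := aroots_frobenius_orbit hp hα
  have hprod1 : ((p.aroots (AlgebraicClosure F)).map fun a => aeval a g).prod
      = x ^ (∑ i ∈ Finset.range d, q ^ i) := by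
    rw [hroots, Multiset.map_map]
    have hptw : ∀ i ∈ Multiset.range d,
        (((fun a => aeval a g) ∘ fun i => α ^ q ^ i) i) = x ^ q ^ i := by
      intro i _
      obtain ⟨φ, hφ⟩ := exists_frobAlg (F := F) i
      show aeval (α ^ q ^ i) g = x ^ q ^ i
      rw [← hφ, aeval_algHom_apply, hφ, hx]
    rw [Multiset.map_congr rfl hptw]
    rw [← Finset.range_val, ← Finset.prod, Finset.prod_pow_eq_pow_sum]
  -- the exponent identity
  set m := ∑ i ∈ Finset.range d, q ^ i with hm
  have hgeom : m * (q - 1) = q ^ d - 1 := by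
    have hz : (m : ℤ) * ((q : ℤ) - 1) = (q : ℤ) ^ d - 1 := by
      rw [hm]
      push_cast
      exact geom_sum_mul (q : ℤ) d
    have h1q : 1 ≤ q := hq1.le
    have h1qd : 1 ≤ q ^ d := Nat.one_le_pow _ _ (by omega)
    zify [h1q, h1qd]
    exact hz
  have hodd : q ^ d % 2 = 1 := by
    rw [Nat.pow_mod, hq2, one_pow, Nat.one_mod_eq_one.mpr (by omega)]
  have hexp : m * (q / 2) = q ^ d / 2 := by
    have h1 : q - 1 = 2 * (q / 2) := by omega
    have h2 : q ^ d - 1 = 2 * (q ^ d / 2) := by omega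
    have := hgeom
    rw [h1, h2] at this
    have : 2 * (m * (q / 2)) = 2 * (q ^ d / 2) := by linarith [this]
    omega
  rw [hprod1, ← pow_mul, hexp]
  -- Euler's criterion in K = AdjoinRoot p
  set K := AdjoinRoot p
  set a : K := AdjoinRoot.mk p g with ha
  have ha0 : a ≠ 0 := fun hc => hpg (AdjoinRoot.mk_eq_zero.mp hc)
  have hcardK : Fintype.card K = q ^ d := card_adjoinRoot
  have hcharK : ringChar K ≠ 2 := by
    intro hc
    have := FiniteField.even_card_of_char_two hc
    rw [hcardK, hodd] at this
    omega
  set emb : K →ₐ[F] (AlgebraicClosure F) := AdjoinRoot.liftAlgHom p (Algebra.ofId F (AlgebraicClosure F)) α hα with hemb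
  have hax : emb a = x := by
    rw [hemb, ha, hx]
    exact AdjoinRoot.liftAlgHom_mk _ _ _ _ _
  have key : x ^ (q ^ d / 2) = emb (a ^ (Fintype.card K / 2)) := by
    rw [map_pow, hax, hcardK]
  rw [key]
  rw [legSym_eq_quadChar, ← ha]
  by_cases hs : IsSquare a
  · rw [(quadraticChar_one_iff_isSquare ha0).mpr hs,
      (FiniteField.isSquare_iff hcharK ha0).mp hs, map_one, Int.cast_one]
  · have hdich := FiniteField.pow_dichotomy hcharK ha0
    have hne1 : a ^ (Fintype.card K / 2) ≠ 1 :=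
      fun hc => hs ((FiniteField.isSquare_iff hcharK ha0).mpr hc)
    have hm1 : a ^ (Fintype.card K / 2) = -1 := hdich.resolve_left hne1
    rw [quadraticChar_neg_one_iff_not_isSquare.mpr hs, hm1, map_neg, map_one, Int.cast_neg,
      Int.cast_one]

end Prime

lemma aroots_card_of_monic {p : Polynomial F} (hpm : p.Monic) :
    Multiset.card (p.aroots (AlgebraicClosure F)) = p.natDegree := by
  rw [aroots_def, ← (IsAlgClosed.splits (p.map (algebraMap F (AlgebraicClosure F)))).natDegree_eq_card_roots,
    natDegree_map]

lemma aeval_eq_prod_roots {r : Polynomial F} (hrm : r.Monic) (α : AlgebraicClosure F) :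
    aeval α r = ((r.aroots (AlgebraicClosure F)).map fun β => α - β).prod := by
  have hsp : (r.map (algebraMap F (AlgebraicClosure F))).Splits :=
    IsAlgClosed.splits _
  have h := hsp.eq_prod_roots_of_monic (hrm.map (algebraMap F (AlgebraicClosure F)))
  rw [aeval_def, ← eval_map]
  conv_lhs => rw [h]
  rw [eval_multiset_prod, Multiset.map_map, aroots_def]
  refine congrArg _ (Multiset.map_congr rfl fun β _ => ?_)
  simp

lemma legSym_swap (hq : Fintype.card F % 4 = 1) {p r : Polynomial F}
    (hp : Irreducible p) (hpm : p.Monic) (hr : Irreducible r) (hrm : r.Monic) :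
    legSym F p r = legSym F r p := by
  classical
  by_cases hpr : p = r
  · subst hpr
    simp [legSym, dvd_refl]
  have hq2 : Fintype.card F % 2 = 1 := by omega
  have hpdr : ¬ p ∣ r := fun hdvd =>
    hpr (eq_of_monic_of_associated hpm hrm (hp.associated_of_dvd hr hdvd))
  have hrdp : ¬ r ∣ p := fun hdvd =>
    hpr (eq_of_monic_of_associated hrm hpm (hr.associated_of_dvd hp hdvd)).symm
  haveI := Fact.mk hp
  haveI := Fact.mk hr
  set q := Fintype.card F
  set d := p.natDegree
  set e := r.natDegree
  have hA : Multiset.card (p.aroots (AlgebraicClosure F)) = d := aroots_card_of_monic hpm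
  have hB : Multiset.card (r.aroots (AlgebraicClosure F)) = e := aroots_card_of_monic hrm
  -- the two casts
  have hcast1 := legSym_cast (p := p) hq2 r hpdr
  have hcast2 := legSym_cast (p := r) hq2 p hrdp
  -- the product swap with sign
  have hswap : ((p.aroots (AlgebraicClosure F)).map fun a => aeval a r).prod
      = (-1 : AlgebraicClosure F) ^ (d * e)
        * ((r.aroots (AlgebraicClosure F)).map fun b => aeval b p).prod := by
    have h1 : ((p.aroots (AlgebraicClosure F)).map fun a => aeval a r).prod
        = ((p.aroots (AlgebraicClosure F)).map fun a =>
            ((r.aroots (AlgebraicClosure F)).map fun b => a - b).prod).prod := by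
      refine congrArg _ (Multiset.map_congr rfl fun a _ => aeval_eq_prod_roots hrm a)
    rw [h1, multiset_prod_map_swap]
    have h2 : ∀ b ∈ r.aroots (AlgebraicClosure F),
        ((p.aroots (AlgebraicClosure F)).map fun a => a - b).prod
          = (-1 : AlgebraicClosure F) ^ d * aeval b p := by
      intro b _
      have hneg : ((p.aroots (AlgebraicClosure F)).map fun a => a - b)
          = ((p.aroots (AlgebraicClosure F)).map fun a => b - a).map Neg.neg := by
        rw [Multiset.map_map]
        exact Multiset.map_congr rfl fun a _ => by simp
      rw [hneg, Multiset.prod_map_neg, Multiset.card_map, hA, aeval_eq_prod_roots hpm b]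
    rw [Multiset.map_congr rfl h2, Multiset.prod_map_mul]
    congr 1
    rw [Multiset.map_const', Multiset.prod_replicate, hB, ← pow_mul]
  -- conclude equality of casts
  have heven : Even (d * e * (q / 2)) := by
    have : Even (q / 2) := by
      refine Nat.even_iff.mpr ?_
      omega
    exact this.mul_left _
  have hcasteq : ((legSym F p r : ℤ) : AlgebraicClosure F)
      = ((legSym F r p : ℤ) : AlgebraicClosure F) := by
    rw [hcast1, hcast2, hswap, mul_pow, ← pow_mul, heven.neg_one_pow, one_mul]
  -- 1 ≠ -1 in the algebraic closure
  have hchar : ringChar F ≠ 2 := by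
    intro hc
    have := FiniteField.even_card_of_char_two hc
    omega
  have h2F : (2 : F) ≠ 0 := Ring.two_ne_zero hchar
  have h2Ω : (1 : AlgebraicClosure F) ≠ -1 := by
    intro hcon
    have h2 : algebraMap F (AlgebraicClosure F) 2 = 0 := by
      rw [show (2 : F) = 1 + 1 by norm_num, map_add, map_one]
      linear_combination hcon
    have := (algebraMap F (AlgebraicClosure F)).injective
      (show algebraMap F (AlgebraicClosure F) 2 = algebraMap F (AlgebraicClosure F) 0 by
        rw [h2, map_zero])
    exact h2F this
  have hZ : ∀ a b : ℤ, a = 1 ∨ a = -1 → b = 1 ∨ b = -1 →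
      ((a : AlgebraicClosure F) = (b : AlgebraicClosure F)) → a = b := by
    rintro a b (rfl | rfl) (rfl | rfl) hab
    · rfl
    · exfalso
      rw [Int.cast_one, Int.cast_neg, Int.cast_one] at hab
      exact h2Ω hab
    · exfalso
      rw [Int.cast_one, Int.cast_neg, Int.cast_one] at hab
      exact h2Ω hab.symm
    · rfl
  exact hZ _ _ (legSym_one_or_neg_one (F := F) hpdr) (legSym_one_or_neg_one (F := F) hrdp) hcasteq

lemma legSym_mul' {p : Polynomial F} (hp : Irreducible p) (g h : Polynomial F) :
    legSym F p (g * h) = legSym F p g * legSym F p h := by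
  haveI := Fact.mk hp
  rw [legSym_eq_quadChar, legSym_eq_quadChar, legSym_eq_quadChar, map_mul, map_mul]

lemma legSym_multiset_prod {p : Polynomial F} (hp : Irreducible p) (s : Multiset (Polynomial F)) :
    legSym F p s.prod = (s.map fun g => legSym F p g).prod := by
  haveI := Fact.mk hp
  induction s using Multiset.induction with
  | empty =>
      simp only [Multiset.prod_zero, Multiset.map_zero]
      rw [legSym_eq_quadChar, map_one, MulChar.map_one]
  | cons a s ih => simp [legSym_mul' hp, ih]

lemma resSym_eq_nf (f g : Polynomial F) :
    letI := Classical.decEq F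
    resSym F f g = ((normalizedFactors f).map fun p => legSym F p g).prod := by
  letI := Classical.decEq F
  rw [resSym, normalizedFactors, Multiset.map_map]
  refine congrArg _ (Multiset.map_congr rfl fun p _ => ?_)
  exact legSym_congr_left g (associated_normalize p)

end Aux

/-- Quadratic reciprocity over `F_q[t]` for `q ≡ 1 mod 4`: for monic `f, g` we have
`(f/g) = (g/f)`. -/
theorem quadratic_reciprocity_function_field (F : Type*) [Field F] [Fintype F]
    (hq : Fintype.card F % 4 = 1) (f g : Polynomial F) (hf : f.Monic) (hg : g.Monic) :
    resSym F g f = resSym F f g := by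
  letI := Classical.decEq F
  have hnf : ∀ {h : Polynomial F}, h.Monic →
      (∀ p ∈ normalizedFactors h, Irreducible p ∧ p.Monic) ∧ (normalizedFactors h).prod = h := by
    intro h hm
    have h0 : h ≠ 0 := hm.ne_zero
    have hfac : ∀ p ∈ normalizedFactors h, Irreducible p ∧ p.Monic := by
      intro p hp
      have hirr : Irreducible p := irreducible_of_normalized_factor p hp
      refine ⟨hirr, ?_⟩
      have : normalize p = p := normalize_normalized_factor p hp
      rw [← this]
      exact monic_normalize hirr.ne_zero
    refine ⟨hfac, ?_⟩
    have hassoc : Associated (normalizedFactors h).prod h := prod_normalizedFactors h0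
    have hmono := monic_multiset_prod_of_monic (normalizedFactors h) id
      (fun p hp => (hfac p hp).2)
    rw [Multiset.map_id] at hmono
    exact eq_of_monic_of_associated hmono hm hassoc
  obtain ⟨hgfac, hgprod⟩ := hnf hg
  obtain ⟨hffac, hfprod⟩ := hnf hf
  rw [resSym_eq_nf, resSym_eq_nf]
  calc ((normalizedFactors g).map fun s => legSym F s f).prod
      = ((normalizedFactors g).map fun s =>
          ((normalizedFactors f).map fun t => legSym F s t).prod).prod := by
        refine congrArg _ (Multiset.map_congr rfl fun s hs => ?_)
        rw [← hfprod, legSym_multiset_prod (hgfac s hs).1, hfprod]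
    _ = ((normalizedFactors f).map fun t =>
          ((normalizedFactors g).map fun s => legSym F s t).prod).prod :=
        multiset_prod_map_swap _ _ _
    _ = ((normalizedFactors f).map fun t =>
          ((normalizedFactors g).map fun s => legSym F t s).prod).prod := by
        refine congrArg _ (Multiset.map_congr rfl fun t ht => ?_)
        refine congrArg _ (Multiset.map_congr rfl fun s hs => ?_)
        exact legSym_swap hq (hgfac s hs).1 (hgfac s hs).2 (hffac t ht).1 (hffac t ht).2
    _ = ((normalizedFactors f).map fun t => legSym F t g).prod := by
        refine congrArg _ (Multiset.map_congr rfl fun t ht => ?_)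
        rw [← legSym_multiset_prod (hffac t ht).1, hgprod]
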